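/- The connective K-theory divided difference operators φ_i (for 1 ≤ i ≤ n−2) satisfy the braid relation φ_i φ_{i+1} φ_i = φ_{i+1} φ_i φ_{i+1} on polynomials in x₁,…,x_n over ℤ[β], where φ_i(P) = ((1 − βx_i)P − (1 − βx_{i+1})σ_i(P))/(x_i − x_{i+1}). -/

import Mathlib

open MvPolynomial
open scoped Classical

/-- `β` as the constant of `ℤ[β][x₁,…,x_n]`. -/
noncomputable def betaP (n : ℕ) : MvPolynomial (Fin n) (Polynomial ℤ) :=
  C Polynomial.X

/-- The connective K-theory divided difference operator
`φ_{a,b}(P) = ((1 − βx_a)P − (1 − βx_b)σ_{a,b}(P))/(x_a − x_b)` on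
`ℤ[β][x₁,…,x_n]`; it is well defined since the numerator is divisible by
`x_a − x_b` (and, the quotient being unique in an integral domain, it is
extracted here via the witness of that divisibility). -/

noncomputable def phiOp {n : ℕ} (a b : Fin n)
    (P : MvPolynomial (Fin n) (Polynomial ℤ)) : MvPolynomial (Fin n) (Polynomial ℤ) :=
  if h : (X a - X b) ∣
      ((1 - betaP n * X a) * P - (1 - betaP n * X b) * rename (Equiv.swap a b) P) then
    Classical.choose h
  else 0


lemma rename_betaP {n : ℕ} (f : Fin n → Fin n) : rename f (betaP n) = betaP n := by
  simp [betaP]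

lemma dvd_sub_rename {n : ℕ} (a b : Fin n) (P : MvPolynomial (Fin n) (Polynomial ℤ)) :
    (X a - X b) ∣ (P - rename (Equiv.swap a b) P) := by
  induction P using MvPolynomial.induction_on with
  | C r => simp
  | add p q hp hq =>
      have h : p + q - rename (Equiv.swap a b) (p + q)
          = (p - rename (Equiv.swap a b) p) + (q - rename (Equiv.swap a b) q) := by
        rw [map_add]; ring
      rw [h]; exact dvd_add hp hq
  | mul_X p j hp =>
      rcases eq_or_ne j a with rfl | hja
      · have h : p * X j - rename (Equiv.swap j b) (p * X j)
            = (p - rename (Equiv.swap j b) p) * X j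
              + rename (Equiv.swap j b) p * (X j - X b) := by
          rw [map_mul, rename_X, Equiv.swap_apply_left]; ring
        rw [h]; exact dvd_add (hp.mul_right _) (dvd_mul_left _ _)
      · rcases eq_or_ne j b with rfl | hjb
        · have h : p * X j - rename (Equiv.swap a j) (p * X j)
              = (p - rename (Equiv.swap a j) p) * X j
                - rename (Equiv.swap a j) p * (X a - X j) := by
            rw [map_mul, rename_X, Equiv.swap_apply_right]; ring
          rw [h]; exact dvd_sub (hp.mul_right _) (dvd_mul_left _ _)
        · have h : p * X j - rename (Equiv.swap a b) (p * X j)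
              = (p - rename (Equiv.swap a b) p) * X j := by
            rw [map_mul, rename_X, Equiv.swap_apply_of_ne_of_ne hja hjb]; ring
          rw [h]; exact hp.mul_right _

lemma dvd_num {n : ℕ} (a b : Fin n) (P : MvPolynomial (Fin n) (Polynomial ℤ)) :
    (X a - X b) ∣
      ((1 - betaP n * X a) * P - (1 - betaP n * X b) * rename (Equiv.swap a b) P) := by
  have h : (1 - betaP n * X a) * P - (1 - betaP n * X b) * rename (Equiv.swap a b) P
      = (1 - betaP n * X a) * (P - rename (Equiv.swap a b) P)
        - (X a - X b) * (betaP n * rename (Equiv.swap a b) P) := by ring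
  rw [h]
  exact dvd_sub ((dvd_sub_rename a b P).mul_left _) (dvd_mul_right _ _)

lemma phi_spec {n : ℕ} (a b : Fin n) (P : MvPolynomial (Fin n) (Polynomial ℤ)) :
    (X a - X b) * phiOp a b P
      = (1 - betaP n * X a) * P - (1 - betaP n * X b) * rename (Equiv.swap a b) P := by
  unfold phiOp
  rw [dif_pos (dvd_num a b P)]
  exact (Classical.choose_spec (dvd_num a b P)).symm

lemma d_ne {n : ℕ} {a b : Fin n} (h : a ≠ b) :
    (X a - X b : MvPolynomial (Fin n) (Polynomial ℤ)) ≠ 0 :=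
  sub_ne_zero.mpr (fun he => h (X_injective he))

lemma phi_symm {n : ℕ} {a b : Fin n} (hab : a ≠ b) (P : MvPolynomial (Fin n) (Polynomial ℤ)) :
    rename (Equiv.swap a b) (phiOp a b P) = phiOp a b P := by
  have h := phi_spec a b P
  have h2 := congrArg (rename (Equiv.swap a b)) h
  have hss : (⇑(Equiv.swap a b) ∘ ⇑(Equiv.swap a b) : Fin n → Fin n) = id :=
    funext fun x => Equiv.swap_apply_self a b x
  simp only [map_sub, map_mul, map_one, rename_X, rename_betaP, rename_rename,
    Equiv.swap_apply_left, Equiv.swap_apply_right, hss, rename_id, AlgHom.id_apply] at h2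
  apply mul_left_cancel₀ (d_ne hab)
  rw [h]
  linear_combination -h2

lemma phi_braid_gen {n : ℕ} (a b c : Fin n) (hab : a ≠ b) (hac : a ≠ c) (hbc : b ≠ c)
    (P : MvPolynomial (Fin n) (Polynomial ℤ)) :
    phiOp a b (phiOp b c (phiOp a b P)) = phiOp b c (phiOp a b (phiOp b c P)) := by
  have e1a : Equiv.swap a b a = b := Equiv.swap_apply_left a b
  have e1b : Equiv.swap a b b = a := Equiv.swap_apply_right a b
  have e1c : Equiv.swap a b c = c := Equiv.swap_apply_of_ne_of_ne hac.symm hbc.symm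
  have e2a : Equiv.swap b c a = a := Equiv.swap_apply_of_ne_of_ne hab hac
  have e2b : Equiv.swap b c b = c := Equiv.swap_apply_left b c
  have e2c : Equiv.swap b c c = b := Equiv.swap_apply_right b c
  have hbr : (⇑(Equiv.swap a b) ∘ ⇑(Equiv.swap b c) ∘ ⇑(Equiv.swap a b) : Fin n → Fin n)
      = ⇑(Equiv.swap b c) ∘ ⇑(Equiv.swap a b) ∘ ⇑(Equiv.swap b c) := by
    funext x
    simp only [Function.comp_apply]
    rcases eq_or_ne x a with rfl | hxa
    · simp only [e1a, e2b, e1c, e2a]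
    · rcases eq_or_ne x b with rfl | hxb
      · simp only [e1b, e2a, e1a, e2b, e1c, e2c]
      · rcases eq_or_ne x c with rfl | hxc
        · simp only [e1c, e2c, e1b, e2a]
        · simp only [Equiv.swap_apply_of_ne_of_ne hxa hxb,
            Equiv.swap_apply_of_ne_of_ne hxb hxc]
  -- abbreviations
  set A := phiOp a b P with hA
  set A' := phiOp b c P with hA'
  have hs1 : rename (Equiv.swap a b) A = A := phi_symm hab P
  have hs2 : rename (Equiv.swap b c) A' = A' := phi_symm hbc P
  have h1 := phi_spec a b P
  have h2 := phi_spec b c A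
  have h3 := phi_spec a b (phiOp b c A)
  have h4 := phi_spec b c P
  have h5 := phi_spec a b A'
  have h6 := phi_spec b c (phiOp a b A')
  have h2r1 := congrArg (rename (Equiv.swap a b)) h2
  simp only [map_sub, map_mul, map_one, rename_X, rename_betaP, rename_rename,
    e1a, e1b, e1c, hs1] at h2r1
  have h1r2 := congrArg (rename (Equiv.swap b c)) h1
  simp only [map_sub, map_mul, map_one, rename_X, rename_betaP, rename_rename,
    e2a, e2b, e2c] at h1r2
  have h1r2r1 := congrArg (rename (Equiv.swap a b)) h1r2
  simp only [map_sub, map_mul, map_one, rename_X, rename_betaP, rename_rename,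
    e1a, e1b, e1c] at h1r2r1
  have h5r2 := congrArg (rename (Equiv.swap b c)) h5
  simp only [map_sub, map_mul, map_one, rename_X, rename_betaP, rename_rename,
    e2a, e2b, e2c, hs2] at h5r2
  have h4r1 := congrArg (rename (Equiv.swap a b)) h4
  simp only [map_sub, map_mul, map_one, rename_X, rename_betaP, rename_rename,
    e1a, e1b, e1c] at h4r1
  have h4r1r2 := congrArg (rename (Equiv.swap b c)) h4r1
  simp only [map_sub, map_mul, map_one, rename_X, rename_betaP, rename_rename,
    e2a, e2b, e2c] at h4r1r2
  rw [← hbr] at h4r1r2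
  have hD : ((X a - X b) * (X b - X c) * (X a - X c) :
      MvPolynomial (Fin n) (Polynomial ℤ)) ≠ 0 :=
    mul_ne_zero (mul_ne_zero (d_ne hab) (d_ne hbc)) (d_ne hac)
  apply mul_left_cancel₀ hD
  linear_combination
    ((X b - X c) * (X a - X c)) * h3
    + ((1 - betaP n * X a) * (X a - X c)) * h2
    - ((1 - betaP n * X b) * (X b - X c)) * h2r1
    + ((1 - betaP n * X a) * (1 - betaP n * X b)) * h1
    - ((1 - betaP n * X a) * (1 - betaP n * X c)) * h1r2
    + ((1 - betaP n * X b) * (1 - betaP n * X c)) * h1r2r1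
    - ((X a - X b) * (X a - X c)) * h6
    - ((1 - betaP n * X b) * (X a - X c)) * h5
    + ((1 - betaP n * X c) * (X a - X b)) * h5r2
    - ((1 - betaP n * X a) * (1 - betaP n * X a)) * h4
    + ((1 - betaP n * X b) * (1 - betaP n * X b)) * h4r1
    - ((1 - betaP n * X c) * (1 - betaP n * X c)) * h4r1r2

/-- The braid relation `φ_i φ_{i+1} φ_i = φ_{i+1} φ_i φ_{i+1}` for the
connective K-theory divided difference operators on `ℤ[β][x₁,…,x_n]`. -/
theorem phi_braid {n : ℕ} (i : ℕ) (hi : i + 2 < n)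
    (P : MvPolynomial (Fin n) (Polynomial ℤ)) :
    phiOp ⟨i, by omega⟩ ⟨i + 1, by omega⟩
        (phiOp ⟨i + 1, by omega⟩ ⟨i + 2, hi⟩
          (phiOp ⟨i, by omega⟩ ⟨i + 1, by omega⟩ P)) =
      phiOp ⟨i + 1, by omega⟩ ⟨i + 2, hi⟩
        (phiOp ⟨i, by omega⟩ ⟨i + 1, by omega⟩
          (phiOp ⟨i + 1, by omega⟩ ⟨i + 2, hi⟩ P)) := by
  exact phi_braid_gen _ _ _ (fun h => by rw [Fin.mk.injEq] at h; omega)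
    (fun h => by rw [Fin.mk.injEq] at h; omega)
    (fun h => by rw [Fin.mk.injEq] at h; omega) P
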